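/- Let I_s : (−1,1) → ℝ be the function I_s(δ) = ∫₀¹ sin(2πw)(1 − δ sin(2πw))^{−3/2} dw. Suppose r₁, r₂, z : [0, T) → ℝ are differentiable with r₁(t) > 0 and r₂(t) > 0, and satisfy the ODE system r₁'(t) = −2π r₂ z I_s(δ) / ρ³ and r₂'(t) = 2π r₁ z I_s(δ) / ρ³, where ρ = √(r₁² + r₂² + z²) and δ = 2 r₁ r₂ / ρ². Then t ↦ r₁(t)² + r₂(t)² is constant on [0, T); equivalently, the total enclosed area π r₁(t)² + π r₂(t)² of the two evolving coaxial circles is conserved. -/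

import Mathlib

noncomputable section

open Real

/-- The parametric integral `I_s(δ)`. -/
def Is (δ : ℝ) : ℝ :=
  ∫ w in (0:ℝ)..1, Real.sin (2 * π * w) / (1 - δ * Real.sin (2 * π * w)) ^ ((3:ℝ)/2)

theorem two_circles_area_conservation
    (T : ℝ) (r₁ r₂ z : ℝ → ℝ)
    (hr₁pos : ∀ t ∈ Set.Ico (0:ℝ) T, 0 < r₁ t)
    (hr₂pos : ∀ t ∈ Set.Ico (0:ℝ) T, 0 < r₂ t)
    (hr₁ : ∀ t ∈ Set.Ico (0:ℝ) T,
      HasDerivWithinAt r₁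
        (-(2 * π * r₂ t * z t * Is (2 * r₁ t * r₂ t / Real.sqrt (r₁ t ^ 2 + r₂ t ^ 2 + z t ^ 2) ^ 2))
          / Real.sqrt (r₁ t ^ 2 + r₂ t ^ 2 + z t ^ 2) ^ 3)
        (Set.Ico (0:ℝ) T) t)
    (hr₂ : ∀ t ∈ Set.Ico (0:ℝ) T,
      HasDerivWithinAt r₂
        ((2 * π * r₁ t * z t * Is (2 * r₁ t * r₂ t / Real.sqrt (r₁ t ^ 2 + r₂ t ^ 2 + z t ^ 2) ^ 2))
          / Real.sqrt (r₁ t ^ 2 + r₂ t ^ 2 + z t ^ 2) ^ 3)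
        (Set.Ico (0:ℝ) T) t)
    (hz : ∀ t ∈ Set.Ico (0:ℝ) T, DifferentiableWithinAt ℝ z (Set.Ico (0:ℝ) T) t) :
    ∀ t ∈ Set.Ico (0:ℝ) T,
      r₁ t ^ 2 + r₂ t ^ 2 = r₁ 0 ^ 2 + r₂ 0 ^ 2
      ∧ π * r₁ t ^ 2 + π * r₂ t ^ 2 = π * r₁ 0 ^ 2 + π * r₂ 0 ^ 2 := by
  intro t ht
  have h0 : (0:ℝ) ∈ Set.Ico (0:ℝ) T := ⟨le_refl 0, lt_of_le_of_lt ht.1 ht.2⟩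
  have hf : ∀ s ∈ Set.Ico (0:ℝ) T,
      HasDerivWithinAt (fun u => r₁ u ^ 2 + r₂ u ^ 2) 0 (Set.Ico (0:ℝ) T) s := by
    intro s hs
    have h := ((hr₁ s hs).fun_pow 2).fun_add ((hr₂ s hs).fun_pow 2)
    exact h.congr_deriv (by push_cast; ring)
  have key : ‖(r₁ t ^ 2 + r₂ t ^ 2) - (r₁ 0 ^ 2 + r₂ 0 ^ 2)‖ ≤ 0 * ‖t - 0‖ := by
    have := (convex_Ico (0:ℝ) T).norm_image_sub_le_of_norm_hasDerivWithin_le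
      (f := fun u => r₁ u ^ 2 + r₂ u ^ 2) (f' := fun _ => (0:ℝ)) (C := 0)
      hf (fun x _ => by simp) h0 ht
    simpa using this
  have heq : r₁ t ^ 2 + r₂ t ^ 2 = r₁ 0 ^ 2 + r₂ 0 ^ 2 := by
    have := key
    rw [zero_mul] at this
    have := norm_le_zero_iff.mp this
    linarith [sub_eq_zero.mp this]
  exact ⟨heq, by linear_combination π * heq⟩
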